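/- Let λ, μ, α > 0. For any integers 0 ≤ x < y, any real z, and any t ≥ 0, P( ξ_y(t) > z ) ≤ P( ξ_x(t) > z − |x − y| ). -/

import Mathlib

open MeasureTheory ProbabilityTheory Filter Set
open scoped ENNReal Topology

noncomputable section

/-- Transition probabilities of the embedded Markov chain of the Poisson process with
uniform catastrophes: from `i ≥ 1`, go to `i+1` with probability `λ/(λ+μ)` and to each
`j < i` with probability `μ/(i(λ+μ))`; from `0`, go to `1` with probability `1`. -/
def transP (lam mu : ℝ) (i j : ℕ) : ℝ :=
  if i = 0 then (if j = 1 then 1 else 0)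
  else if j = i + 1 then lam / (lam + mu)
  else if j < i then mu / (i * (lam + mu))
  else 0

/-- `η` is (distributed as) the discrete-time Markov chain on `ℕ` started at `x` with
transition probabilities `transP lam mu`, under the probability measure `P`:
the finite-dimensional distributions are products of transition probabilities. -/
def IsMarkovChainFrom {Ω : Type*} [MeasurableSpace Ω] (P : Measure Ω)
    (lam mu : ℝ) (x : ℕ) (η : ℕ → Ω → ℕ) : Prop :=
  (∀ k, Measurable (η k)) ∧
  ∀ (n : ℕ) (path : ℕ → ℕ),
    P {ω | ∀ l ≤ n, η l ω = path l} =
      (if path 0 = x then 1 else 0) *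
        ∏ l ∈ Finset.range n, ENNReal.ofReal (transP lam mu (path l) (path (l + 1)))

/-- `ν` is a Poisson process of rate `α` under `P`: it starts at `0`, has monotone paths
on `[0,∞)`, independent increments, and each increment over `[s,t]` is Poisson
distributed with mean `α(t-s)`. -/
def IsPoissonProcess {Ω : Type*} [MeasurableSpace Ω] (P : Measure Ω)
    (α : ℝ) (ν : ℝ → Ω → ℕ) : Prop :=
  (∀ t, Measurable (ν t)) ∧
  (∀ ω, ν 0 ω = 0) ∧
  (∀ ω, MonotoneOn (fun t => ν t ω) (Set.Ici (0 : ℝ))) ∧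
  (∀ (n : ℕ) (t : ℕ → ℝ), 0 ≤ t 0 → Monotone t →
    iIndepFun
      (fun i : Fin n => fun ω => ν (t (i + 1)) ω - ν (t i) ω) P) ∧
  (∀ s t : ℝ, 0 ≤ s → s ≤ t → ∀ k : ℕ,
    P {ω | ν t ω - ν s ω = k} =
      ENNReal.ofReal (Real.exp (-(α * (t - s))) * (α * (t - s)) ^ k / (Nat.factorial k)))

/-- The processes `η` and `ν` are independent (as processes). -/
def IndepProc {Ω : Type*} [MeasurableSpace Ω] (P : Measure Ω)
    (η : ℕ → Ω → ℕ) (ν : ℝ → Ω → ℕ) : Prop :=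
  IndepFun (fun ω => fun k => η k ω) (fun ω => fun t => ν t ω) P

/-- `ξ` is (distributed as) the Poisson process with uniform catastrophes started from
`x`: `ξ(t) = η(ν(t))` where `η` is the embedded Markov chain started at `x` (from `i ≥ 1`
it jumps to `i+1` with probability `λ/(λ+μ)` and uniformly down with probability
`μ/(λ+μ)`, and from `0` it jumps to `1`), and `ν` is an independent Poisson process of
rate `α`. -/
def IsCatastropheProcessFrom {Ω : Type*} [MeasurableSpace Ω] (P : Measure Ω)
    (lam mu α : ℝ) (x : ℕ) (ξ : ℝ → Ω → ℕ) : Prop :=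
  ∃ (η : ℕ → Ω → ℕ) (ν : ℝ → Ω → ℕ),
    IsMarkovChainFrom P lam mu x η ∧ IsPoissonProcess P α ν ∧
    IndepProc P η ν ∧ ∀ t ω, ξ t ω = η (ν t ω) ω

namespace TailCmp
variable (lam mu : ℝ)

def K (i j : ℕ) : ℝ≥0∞ := ENNReal.ofReal (transP lam mu i j)

def L (x : ℕ) : ℕ → ℕ → ℝ≥0∞
  | 0, m => if m = x then 1 else 0
  | n+1, m => ∑' i, L x n i * K lam mu i m

def TailK (a i : ℕ) : ℝ≥0∞ := ∑' j, (if a ≤ j then K lam mu i j else 0)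

def TailL (x n a : ℕ) : ℝ≥0∞ := ∑' m, (if a ≤ m then L lam mu x n m else 0)

lemma K_apply_zero (j : ℕ) : K lam mu 0 j = if j = 1 then 1 else 0 := by
  unfold K transP
  by_cases h : j = 1 <;> simp [h]

lemma TailK_zero_state (a : ℕ) : TailK lam mu a 0 = if a ≤ 1 then 1 else 0 := by
  unfold TailK
  rw [tsum_eq_single 1]
  · rw [K_apply_zero]; simp
  · intro j hj
    rw [K_apply_zero]
    simp [hj]

lemma TailK_eq {i : ℕ} (hi : i ≠ 0) (a : ℕ) :
    TailK lam mu a i =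
      (if a ≤ i + 1 then ENNReal.ofReal (lam / (lam + mu)) else 0) +
        (i - a : ℕ) * ENNReal.ofReal (mu / (i * (lam + mu))) := by
  have hKii : K lam mu i i = 0 := by
    unfold K transP
    rw [if_neg hi, if_neg (by omega), if_neg (by omega), ENNReal.ofReal_zero]
  have hKisucc : K lam mu i (i + 1) = ENNReal.ofReal (lam / (lam + mu)) := by
    unfold K transP; rw [if_neg hi, if_pos rfl]
  have hKlow : ∀ j < i, K lam mu i j = ENNReal.ofReal (mu / (i * (lam + mu))) := by
    intro j hj
    unfold K transP
    rw [if_neg hi, if_neg (by omega), if_pos hj]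
  unfold TailK
  rw [tsum_eq_sum (s := Finset.range (i + 2)) ?_]
  · rw [Finset.sum_range_succ, Finset.sum_range_succ]
    have h1 : ∑ j ∈ Finset.range i, (if a ≤ j then K lam mu i j else 0)
        = (i - a : ℕ) * ENNReal.ofReal (mu / (i * (lam + mu))) := by
      rw [Finset.sum_congr rfl (fun j hj => by
        rw [hKlow j (Finset.mem_range.mp hj)])]
      rw [Finset.sum_ite, Finset.sum_const, Finset.sum_const_zero, add_zero]
      have hcard : (Finset.filter (fun j => a ≤ j) (Finset.range i)).card = i - a := by
        have : Finset.filter (fun j => a ≤ j) (Finset.range i) = Finset.Ico a i := by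
          ext j; simp [Finset.mem_filter, Finset.mem_range, Finset.mem_Ico]; omega
        rw [this, Nat.card_Ico]
      rw [hcard, nsmul_eq_mul]
    rw [h1, hKii, hKisucc]
    ring_nf
    simp [add_comm]
  · intro j hj
    have hij : i + 2 ≤ j := by simpa [Finset.mem_range] using hj
    have hK : K lam mu i j = 0 := by
      unfold K transP
      rw [if_neg hi, if_neg (by omega), if_neg (by omega), ENNReal.ofReal_zero]
    simp [hK]

end TailCmp

namespace TailCmp
variable {lam mu : ℝ}

lemma ofReal_lam_le_one (hlam : 0 < lam) (hmu : 0 < mu) :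
    ENNReal.ofReal (lam / (lam + mu)) ≤ 1 := by
  rw [ENNReal.ofReal_le_one]
  rw [div_le_one (by linarith)]
  linarith

lemma TailK_zero (hlam : 0 < lam) (hmu : 0 < mu) (i : ℕ) : TailK lam mu 0 i = 1 := by
  rcases Nat.eq_zero_or_pos i with hi | hi
  · subst hi; rw [TailK_zero_state]; simp
  · rw [TailK_eq lam mu (by omega)]
    have hlm : (0:ℝ) < lam + mu := by linarith
    have hipos : (0:ℝ) < (i:ℝ) := by exact_mod_cast hi
    have h1 : ((i - 0 : ℕ) : ℝ≥0∞) = ENNReal.ofReal (i : ℝ) := by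
      simp [ENNReal.ofReal_natCast]
    rw [if_pos (by omega), Nat.sub_zero]
    have h2 : (i : ℝ≥0∞) * ENNReal.ofReal (mu / (i * (lam + mu)))
        = ENNReal.ofReal (mu / (lam + mu)) := by
      rw [← ENNReal.ofReal_natCast i, ← ENNReal.ofReal_mul (Nat.cast_nonneg i)]
      field_simp
    rw [h2, ← ENNReal.ofReal_add (by positivity) (by positivity)]
    rw [← add_div, div_self (by linarith)]
    exact ENNReal.ofReal_one

lemma TailK_le_one (hlam : 0 < lam) (hmu : 0 < mu) (a i : ℕ) : TailK lam mu a i ≤ 1 := by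
  rw [← TailK_zero hlam hmu i]
  exact Summable.tsum_le_tsum (fun j => by
    by_cases h : a ≤ j <;> simp [h]) ENNReal.summable ENNReal.summable

lemma TailK_mono (hlam : 0 < lam) (hmu : 0 < mu) {a : ℕ} (ha : 2 ≤ a) :
    Monotone (TailK lam mu a) := by
  apply monotone_nat_of_le_succ
  intro i
  rcases Nat.eq_zero_or_pos i with hi | hi
  · subst hi
    rw [TailK_zero_state, if_neg (by omega)]
    exact zero_le
  · rw [TailK_eq lam mu (by omega), TailK_eq lam mu (by omega : i + 1 ≠ 0)]
    apply add_le_add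
    · by_cases h : a ≤ i + 1
      · rw [if_pos h, if_pos (by omega)]
      · rw [if_neg h]; exact zero_le
    · have hlm : (0:ℝ) < lam + mu := by linarith
      have hipos : (0:ℝ) < (i:ℝ) := by exact_mod_cast hi
      have hkey : ((i - a : ℕ) : ℝ) * (mu / (i * (lam + mu))) ≤
          ((i + 1 - a : ℕ) : ℝ) * (mu / ((i+1 : ℕ) * (lam + mu))) := by
        have hnat : (i - a) * (i + 1) ≤ (i + 1 - a) * i := by
          have h1 : (i - a) * (i + 1) = i * (i + 1) - a * (i + 1) := Nat.sub_mul ..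
          have h2 : (i + 1 - a) * i = (i + 1) * i - a * i := Nat.sub_mul ..
          rw [h1, h2, mul_comm (i+1) i]
          exact Nat.sub_le_sub_left (Nat.mul_le_mul_left a (by omega)) _
        have hcast : ((i - a : ℕ) : ℝ) * ((i:ℝ) + 1) ≤ ((i + 1 - a : ℕ) : ℝ) * (i:ℝ) := by
          exact_mod_cast hnat
        rw [mul_div_assoc', mul_div_assoc',
          div_le_div_iff₀ (by positivity) (by positivity)]
        push_cast
        nlinarith [mul_le_mul_of_nonneg_right hcast (mul_nonneg hmu.le hlm.le)]
      calc ((i - a : ℕ) : ℝ≥0∞) * ENNReal.ofReal (mu / (i * (lam + mu)))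
          = ENNReal.ofReal (((i - a : ℕ) : ℝ) * (mu / (i * (lam + mu)))) := by
            rw [← ENNReal.ofReal_natCast (i - a),
              ← ENNReal.ofReal_mul (Nat.cast_nonneg _)]
        _ ≤ ENNReal.ofReal (((i + 1 - a : ℕ) : ℝ) * (mu / ((i+1:ℕ) * (lam + mu)))) :=
            ENNReal.ofReal_le_ofReal hkey
        _ = ((i + 1 - a : ℕ) : ℝ≥0∞) * ENNReal.ofReal (mu / ((i+1:ℕ) * (lam + mu))) := by
            rw [← ENNReal.ofReal_natCast (i + 1 - a),
              ← ENNReal.ofReal_mul (Nat.cast_nonneg _)]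

lemma TailK_shift (hlam : 0 < lam) (hmu : 0 < mu) {c d : ℕ} (hc : 1 ≤ c) (hd : 1 ≤ d)
    (i : ℕ) : TailK lam mu (c + d) (i + d) ≤ TailK lam mu c i := by
  have hlm : (0:ℝ) < lam + mu := by linarith
  rcases Nat.eq_zero_or_pos i with hi | hi
  · subst hi
    rw [TailK_zero_state, TailK_eq lam mu (by omega : 0 + d ≠ 0)]
    have h0 : (0 + d - (c + d) : ℕ) = 0 := by omega
    rw [h0]
    simp only [Nat.cast_zero, zero_mul, add_zero]
    by_cases h : c ≤ 1
    · rw [if_pos (by omega), if_pos h]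
      exact ofReal_lam_le_one hlam hmu
    · rw [if_neg (by omega), if_neg h]
  · rw [TailK_eq lam mu (by omega : i + d ≠ 0), TailK_eq lam mu (by omega : i ≠ 0)]
    apply add_le_add
    · by_cases h : c ≤ i + 1
      · rw [if_pos (by omega), if_pos h]
      · rw [if_neg (by omega), if_neg h]
    · rw [show (i + d - (c + d) : ℕ) = i - c by omega]
      apply mul_le_mul_right
      apply ENNReal.ofReal_le_ofReal
      apply div_le_div_of_nonneg_left hmu.le (by positivity)
      have : (i:ℝ) ≤ ((i + d : ℕ) : ℝ) := by exact_mod_cast Nat.le_add_right i d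
      nlinarith

end TailCmp

namespace TailCmp
variable {lam mu : ℝ}

lemma K_tsum (hlam : 0 < lam) (hmu : 0 < mu) (i : ℕ) : ∑' j, K lam mu i j = 1 := by
  rw [← TailK_zero hlam hmu i]
  unfold TailK
  simp

lemma L_mass (hlam : 0 < lam) (hmu : 0 < mu) (x n : ℕ) : ∑' m, L lam mu x n m = 1 := by
  induction n with
  | zero =>
    show (∑' m, if m = x then (1:ℝ≥0∞) else 0) = 1
    rw [tsum_ite_eq]
  | succ n ih =>
    show (∑' m, ∑' i, L lam mu x n i * K lam mu i m) = 1
    rw [ENNReal.tsum_comm]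
    calc (∑' i, ∑' m, L lam mu x n i * K lam mu i m)
        = ∑' i, L lam mu x n i * ∑' m, K lam mu i m := by
          congr 1; ext i; rw [ENNReal.tsum_mul_left]
      _ = ∑' i, L lam mu x n i := by
          congr 1; ext i; rw [K_tsum hlam hmu, mul_one]
      _ = 1 := ih

lemma TailL_zero (hlam : 0 < lam) (hmu : 0 < mu) (x n : ℕ) : TailL lam mu x n 0 = 1 := by
  unfold TailL
  simpa using L_mass hlam hmu x n

lemma TailL_le_one (hlam : 0 < lam) (hmu : 0 < mu) (x n a : ℕ) : TailL lam mu x n a ≤ 1 := by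
  rw [← TailL_zero hlam hmu x n]
  exact Summable.tsum_le_tsum (fun m => by by_cases h : a ≤ m <;> simp [h])
    ENNReal.summable ENNReal.summable

lemma TailL_succ (x n a : ℕ) :
    TailL lam mu x (n+1) a = ∑' i, L lam mu x n i * TailK lam mu a i := by
  unfold TailL
  show (∑' m, if a ≤ m then ∑' i, L lam mu x n i * K lam mu i m else 0) = _
  have h1 : ∀ m : ℕ, (if a ≤ m then ∑' i, L lam mu x n i * K lam mu i m else 0)
      = ∑' i, L lam mu x n i * (if a ≤ m then K lam mu i m else 0) := by
    intro m
    by_cases h : a ≤ m <;> simp [h]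
  rw [tsum_congr h1, ENNReal.tsum_comm]
  congr 1; ext i
  rw [ENNReal.tsum_mul_left]
  rfl

lemma TailL_base (x a : ℕ) : TailL lam mu x 0 a = if a ≤ x then 1 else 0 := by
  unfold TailL
  show (∑' m, if a ≤ m then (if m = x then (1:ℝ≥0∞) else 0) else 0) = _
  rw [tsum_eq_single x (fun m hm => by by_cases h : a ≤ m <;> simp [h, hm])]
  by_cases h : a ≤ x <;> simp [h]

/-- Telescoping for monotone `g` in `ℝ≥0∞`. -/
lemma telescope {g : ℕ → ℝ≥0∞} (hg : Monotone g) (j : ℕ) :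
    g j = g 0 + ∑ c ∈ Finset.range j, (g (c+1) - g c) := by
  induction j with
  | zero => simp
  | succ j ih =>
    rw [Finset.sum_range_succ, ← add_assoc, ← ih,
      add_tsub_cancel_of_le (hg (Nat.le_succ j))]

/-- Abel summation in `ℝ≥0∞`. -/
lemma lemA {π g : ℕ → ℝ≥0∞} (hg : Monotone g) (hπ : ∑' j, π j = 1) :
    ∑' j, π j * g j
      = g 0 + ∑' c, (g (c+1) - g c) * (∑' j, if c + 1 ≤ j then π j else 0) := by
  have h1 : ∀ j, π j * g j
      = π j * g 0 + ∑' c, (if c + 1 ≤ j then π j * (g (c+1) - g c) else 0) := by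
    intro j
    rw [telescope hg j, mul_add, Finset.mul_sum]
    congr 1
    rw [tsum_eq_sum (s := Finset.range j) (fun c hc => by
      rw [if_neg (by simp only [Finset.mem_range, not_lt] at hc; omega)])]
    exact Finset.sum_congr rfl (fun c hc => by
      rw [if_pos (by simpa [Nat.succ_le_iff, Finset.mem_range] using hc)])
  rw [tsum_congr h1, ENNReal.tsum_add, ENNReal.tsum_mul_right, hπ, one_mul]
  congr 1
  rw [ENNReal.tsum_comm]
  congr 1; ext c
  rw [← ENNReal.tsum_mul_left]
  congr 1; ext j
  by_cases h : c + 1 ≤ j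
  · rw [if_pos h, if_pos h, mul_comm]
  · rw [if_neg h, if_neg h, mul_zero]

lemma tsum_split (d : ℕ) (f : ℕ → ℝ≥0∞) :
    ∑' i, f i = ∑ i ∈ Finset.range d, f i + ∑' i, f (i + d) := by
  induction d with
  | zero => simp
  | succ d ih =>
    rw [ih, Finset.sum_range_succ, tsum_eq_zero_add' (f := fun i => f (i + d)) ENNReal.summable]
    have h1 : f (0 + d) = f d := by rw [Nat.zero_add]
    have h2 : (∑' b, f (b + 1 + d)) = ∑' i, f (i + (d+1)) := tsum_congr fun b => by
      rw [show b + 1 + d = b + (d+1) by omega]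
    rw [h1, h2, add_assoc]

/-- One-step preservation of shifted stochastic domination. -/
lemma lemB {π π' g : ℕ → ℝ≥0∞} {d : ℕ}
    (hπ : ∑' j, π j = 1) (hπ' : ∑' i, π' i = 1)
    (hT : ∀ c, (∑' j, if c + d ≤ j then π j else 0) ≤ ∑' i, if c ≤ i then π' i else 0)
    (hg : Monotone g) :
    ∑' j, π j * g j ≤ ∑' i, π' i * g (i + d) := by
  have hh : Monotone (fun i => g (i + d)) := fun a b hab => hg (by omega)
  rw [lemA hg hπ, lemA hh hπ']
  rw [tsum_split d (fun c => (g (c+1) - g c) * (∑' j, if c + 1 ≤ j then π j else 0))]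
  have h1 : ∑ c ∈ Finset.range d, (g (c+1) - g c) * (∑' j, if c + 1 ≤ j then π j else 0)
      ≤ ∑ c ∈ Finset.range d, (g (c+1) - g c) := by
    apply Finset.sum_le_sum
    intro c _
    have : (∑' j, if c + 1 ≤ j then π j else 0) ≤ 1 := by
      rw [← hπ]
      exact Summable.tsum_le_tsum (fun j => by by_cases h : c + 1 ≤ j <;> simp [h])
        ENNReal.summable ENNReal.summable
    calc (g (c+1) - g c) * _ ≤ (g (c+1) - g c) * 1 := mul_le_mul_right this _
      _ = _ := mul_one _
  have h2 : ∀ c : ℕ, (g (c + d + 1) - g (c + d)) * (∑' j, if c + d + 1 ≤ j then π j else 0)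
      ≤ (g (c + 1 + d) - g (c + d)) * (∑' i, if c + 1 ≤ i then π' i else 0) := by
    intro c
    rw [show c + 1 + d = c + d + 1 by omega]
    apply mul_le_mul_right
    rw [show c + d + 1 = (c + 1) + d by omega]
    exact hT (c + 1)
  calc g 0 + (∑ c ∈ Finset.range d, (g (c+1) - g c) * (∑' j, if c + 1 ≤ j then π j else 0)
        + ∑' c, (g (c + d + 1) - g (c + d)) * (∑' j, if c + d + 1 ≤ j then π j else 0))
      ≤ g 0 + (∑ c ∈ Finset.range d, (g (c+1) - g c)
        + ∑' c, (g (c + 1 + d) - g (c + d)) * (∑' i, if c + 1 ≤ i then π' i else 0)) := by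
        exact add_le_add_right
          (add_le_add h1 (Summable.tsum_le_tsum h2 ENNReal.summable ENNReal.summable)) _
    _ = (g 0 + ∑ c ∈ Finset.range d, (g (c+1) - g c))
        + ∑' c, (g (c + 1 + d) - g (c + d)) * (∑' i, if c + 1 ≤ i then π' i else 0) := by
        ring
    _ = g (0 + d) + ∑' c, (g (c + 1 + d) - g (c + d)) *
          (∑' i, if c + 1 ≤ i then π' i else 0) := by
        rw [← telescope hg d]
        norm_num

/-- Main shifted stochastic domination along the chain. -/
lemma tail_dom (hlam : 0 < lam) (hmu : 0 < mu) (x d : ℕ) (hd : 1 ≤ d) :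
    ∀ n c, TailL lam mu (x + d) n (c + d) ≤ TailL lam mu x n c := by
  intro n
  induction n with
  | zero =>
    intro c
    rw [TailL_base, TailL_base]
    by_cases h : c ≤ x
    · rw [if_pos (by omega), if_pos h]
    · rw [if_neg (by omega), if_neg h]
  | succ n ih =>
    intro c
    rw [TailL_succ, TailL_succ]
    rcases Nat.eq_zero_or_pos c with hc | hc
    · subst hc
      calc (∑' i, L lam mu (x+d) n i * TailK lam mu (0 + d) i)
          ≤ ∑' i, L lam mu (x+d) n i * 1 := by
            gcongr with i
            exact TailK_le_one hlam hmu _ _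
        _ = 1 := by simpa using L_mass hlam hmu (x+d) n
        _ = ∑' i, L lam mu x n i * TailK lam mu 0 i := by
            rw [tsum_congr (fun i => by rw [TailK_zero hlam hmu, mul_one])]
            exact (L_mass hlam hmu x n).symm
    · calc (∑' j, L lam mu (x+d) n j * TailK lam mu (c + d) j)
          ≤ ∑' i, L lam mu x n i * TailK lam mu (c + d) (i + d) := by
            apply lemB (L_mass hlam hmu (x+d) n) (L_mass hlam hmu x n)
              (fun c' => ih c') (TailK_mono hlam hmu (by omega))
        _ ≤ ∑' i, L lam mu x n i * TailK lam mu c i := by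
            gcongr with i
            exact TailK_shift hlam hmu hc hd i
end TailCmp

namespace TailCmp
open MeasureTheory

variable {Om : Type*} [MeasurableSpace Om] {P : Measure Om} {lam mu : ℝ} {x : ℕ}
  {eta : ℕ → Om → ℕ}

/-- Cylinder event for the first `n+1` values of the chain. -/
def Cyl (eta : ℕ → Om → ℕ) (n : ℕ) (p : Fin (n+1) → ℕ) : Set Om :=
  {ω | ∀ l : Fin (n+1), eta l ω = p l}

lemma measurableSet_cyl (hmeas : ∀ k, Measurable (eta k)) (n : ℕ) (p : Fin (n+1) → ℕ) :
    MeasurableSet (Cyl eta n p) := by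
  have : Cyl eta n p = ⋂ l : Fin (n+1), (eta l) ⁻¹' {p l} := by
    ext ω; simp [Cyl]
  rw [this]
  exact MeasurableSet.iInter fun l => (hmeas l) (measurableSet_singleton _)

lemma partition (hmeas : ∀ k, Measurable (eta k)) {S : Set Om} (hS : MeasurableSet S)
    (n : ℕ) : P S = ∑' p : Fin (n+1) → ℕ, P (S ∩ Cyl eta n p) := by
  have hU : (⋃ p : Fin (n+1) → ℕ, S ∩ Cyl eta n p) = S := by
    ext ω
    constructor
    · rintro ⟨U, ⟨p, rfl⟩, hω⟩
      exact hω.1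
    · intro hω
      exact Set.mem_iUnion.mpr ⟨fun l => eta l ω, hω, fun l => rfl⟩
  have hdisj : Pairwise (Function.onFun Disjoint (fun p : Fin (n+1) → ℕ => S ∩ Cyl eta n p)) := by
    intro p q hpq
    rw [Function.onFun, Set.disjoint_left]
    rintro ω ⟨-, hp⟩ ⟨-, hq⟩
    exact hpq (funext fun l => (hp l).symm.trans (hq l))
  have hm := measure_iUnion (μ := P) hdisj (fun p => hS.inter (measurableSet_cyl hmeas n p))
  rw [hU] at hm
  exact hm

lemma cyl_succ (hη : IsMarkovChainFrom P lam mu x eta) (n : ℕ) (p : Fin (n+1) → ℕ)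
    (m : ℕ) :
    P (Cyl eta (n+1) (Fin.snoc p m)) = P (Cyl eta n p) * K lam mu (p (Fin.last n)) m := by
  set path : ℕ → ℕ := fun l => if h : l < n + 2 then Fin.snoc (α := fun _ : Fin (n+2) => ℕ) p m ⟨l, h⟩ else 0 with hpath
  have hpathlt : ∀ (l : ℕ) (h : l < n + 2),
      path l = Fin.snoc (α := fun _ : Fin (n+2) => ℕ) p m ⟨l, h⟩ := by
    intro l h; simp only [hpath, dif_pos h]
  have hs1 : {ω | ∀ l ≤ n + 1, eta l ω = path l} = Cyl eta (n+1) (Fin.snoc p m) := by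
    ext ω
    constructor
    · intro h l
      have := h l.val (by omega)
      rw [hpathlt l.val l.isLt] at this
      simpa [Fin.eta] using this
    · intro h l hl
      rw [hpathlt l (by omega)]
      exact h ⟨l, by omega⟩
  have hs2 : {ω | ∀ l ≤ n, eta l ω = path l} = Cyl eta n p := by
    ext ω
    constructor
    · intro h l
      have := h l.val (by omega)
      rw [hpathlt l.val (by omega)] at this
      have heq : (⟨l.val, by omega⟩ : Fin (n+2)) = Fin.castSucc l := by
        apply Fin.ext; simp
      rw [heq, Fin.snoc_castSucc] at this
      exact this
    · intro h l hl
      rw [hpathlt l (by omega)]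
      have heq : (⟨l, by omega⟩ : Fin (n+2)) = Fin.castSucc ⟨l, by omega⟩ := by
        apply Fin.ext; simp
      rw [heq, Fin.snoc_castSucc]
      exact h ⟨l, by omega⟩
  have h1 := hη.2 (n+1) path
  have h2 := hη.2 n path
  rw [hs1] at h1
  rw [hs2] at h2
  rw [h1, Finset.prod_range_succ, ← mul_assoc, ← h2]
  have hn : path n = p (Fin.last n) := by
    rw [hpathlt n (by omega)]
    have heq : (⟨n, by omega⟩ : Fin (n+2)) = Fin.castSucc (Fin.last n) := by
      apply Fin.ext; simp
    rw [heq, Fin.snoc_castSucc]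
  have hn1 : path (n+1) = m := by
    rw [hpathlt (n+1) (by omega)]
    have heq : (⟨n+1, by omega⟩ : Fin (n+2)) = Fin.last (n+1) := rfl
    rw [heq, Fin.snoc_last]
  rw [hn, hn1]
  rfl

lemma marg (hη : IsMarkovChainFrom P lam mu x eta) :
    ∀ n m, P {ω | eta n ω = m} = L lam mu x n m := by
  intro n
  induction n with
  | zero =>
    intro m
    have hs : {ω | eta 0 ω = m} = {ω | ∀ l ≤ 0, eta l ω = (fun _ => m) l} := by
      ext ω
      simp only [Set.mem_setOf_eq]
      constructor
      · intro h l hl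
        rw [Nat.le_zero.mp hl, h]
      · intro h
        exact h 0 le_rfl
    rw [hs, hη.2 0 (fun _ => m)]
    simp [L]
  | succ n ih =>
    intro m
    have hSmeas : MeasurableSet {ω | eta (n+1) ω = m} :=
      (hη.1 (n+1)) (measurableSet_singleton m)
    have hstep1 : P {ω | eta (n+1) ω = m}
        = ∑' p : Fin (n+1) → ℕ, P (Cyl eta n p) * K lam mu (p (Fin.last n)) m := by
      rw [partition hη.1 hSmeas n]
      apply tsum_congr
      intro p
      have hset : {ω | eta (n+1) ω = m} ∩ Cyl eta n p = Cyl eta (n+1) (Fin.snoc p m) := by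
        ext ω
        constructor
        · rintro ⟨h1, h2⟩ l
          rcases Nat.lt_or_ge l.val (n+1) with hl | hl
          · have heq : l = Fin.castSucc ⟨l.val, hl⟩ := by apply Fin.ext; simp
            rw [heq, Fin.snoc_castSucc]
            exact h2 ⟨l.val, hl⟩
          · have heq : l = Fin.last (n+1) := by apply Fin.ext; simp; omega
            rw [heq, Fin.snoc_last]
            exact h1
        · intro h
          constructor
          · have := h (Fin.last (n+1))
            rw [Fin.snoc_last] at this
            exact this
          · intro l
            have := h (Fin.castSucc l)
            rw [Fin.snoc_castSucc] at this
            exact this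
      rw [hset]
      exact cyl_succ hη n p m
    have hstep2 : ∀ i : ℕ, P {ω | eta n ω = i}
        = ∑' p : Fin (n+1) → ℕ, (if p (Fin.last n) = i then P (Cyl eta n p) else 0) := by
      intro i
      have hSm : MeasurableSet {ω | eta n ω = i} := (hη.1 n) (measurableSet_singleton i)
      rw [partition hη.1 hSm n]
      apply tsum_congr
      intro p
      by_cases h : p (Fin.last n) = i
      · rw [if_pos h]
        congr 1
        apply Set.inter_eq_self_of_subset_right
        intro ω hω
        have := hω (Fin.last n)
        simp only [Set.mem_setOf_eq]
        rw [← h]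
        exact this
      · rw [if_neg h]
        have : {ω | eta n ω = i} ∩ Cyl eta n p = ∅ := by
          ext ω
          simp only [Set.mem_inter_iff, Set.mem_setOf_eq, Set.mem_empty_iff_false,
            iff_false]
          rintro ⟨h1, h2⟩
          exact h ((h2 (Fin.last n)).symm.trans h1)
        rw [this, measure_empty]
    show P {ω | eta (n+1) ω = m} = ∑' i, L lam mu x n i * K lam mu i m
    calc P {ω | eta (n+1) ω = m}
        = ∑' p : Fin (n+1) → ℕ, P (Cyl eta n p) * K lam mu (p (Fin.last n)) m := hstep1
      _ = ∑' p : Fin (n+1) → ℕ, ∑' i,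
            (if p (Fin.last n) = i then P (Cyl eta n p) * K lam mu i m else 0) := by
          apply tsum_congr; intro p
          symm
          rw [tsum_eq_single (p (Fin.last n)) (fun i hi => by rw [if_neg (Ne.symm hi)]),
            if_pos rfl]
      _ = ∑' i, ∑' p : Fin (n+1) → ℕ,
            (if p (Fin.last n) = i then P (Cyl eta n p) * K lam mu i m else 0) :=
          ENNReal.tsum_comm
      _ = ∑' i, (∑' p : Fin (n+1) → ℕ,
            (if p (Fin.last n) = i then P (Cyl eta n p) else 0)) * K lam mu i m := by
          apply tsum_congr; intro i
          rw [← ENNReal.tsum_mul_right]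
          apply tsum_congr; intro p
          rw [ite_mul, zero_mul]
      _ = ∑' i, P {ω | eta n ω = i} * K lam mu i m := by
          apply tsum_congr; intro i; rw [← hstep2 i]
      _ = ∑' i, L lam mu x n i * K lam mu i m := by
          apply tsum_congr; intro i; rw [ih i]

lemma tail_marg (hη : IsMarkovChainFrom P lam mu x eta) (n c : ℕ) :
    P {ω | c ≤ eta n ω} = TailL lam mu x n c := by
  have hs : {ω | c ≤ eta n ω}
      = ⋃ m : ℕ, (if c ≤ m then {ω | eta n ω = m} else ∅) := by
    ext ω
    simp only [Set.mem_setOf_eq, Set.mem_iUnion]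
    constructor
    · intro h
      exact ⟨eta n ω, by rw [if_pos h]; exact rfl⟩
    · rintro ⟨m, hm⟩
      by_cases h : c ≤ m
      · rw [if_pos h] at hm
        have : eta n ω = m := hm
        omega
      · rw [if_neg h] at hm
        exact absurd hm (Set.notMem_empty ω)
  rw [hs, measure_iUnion ?_ ?_]
  · apply tsum_congr
    intro m
    by_cases h : c ≤ m
    · rw [if_pos h, if_pos h, marg hη]
    · rw [if_neg h, if_neg h, measure_empty]
  · intro a b hab
    rw [Function.onFun, Set.disjoint_left]
    intro ω hωa hωb
    by_cases ha : c ≤ a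
    · by_cases hb : c ≤ b
      · rw [if_pos ha] at hωa
        rw [if_pos hb] at hωb
        have h1 : eta n ω = a := hωa
        have h2 : eta n ω = b := hωb
        exact hab (h1.symm.trans h2)
      · rw [if_neg hb] at hωb
        exact hωb
    · rw [if_neg ha] at hωa
      exact hωa
  · intro m
    by_cases h : c ≤ m
    · rw [if_pos h]; exact (hη.1 n) (measurableSet_singleton m)
    · rw [if_neg h]; exact MeasurableSet.empty

end TailCmp


namespace TailCmp
open MeasureTheory ProbabilityTheory

lemma xi_tail {Om : Type*} [MeasurableSpace Om] {P : Measure Om}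
    {lam mu alpha : ℝ} {x : ℕ} {eta : ℕ → Om → ℕ} {nu : ℝ → Om → ℕ}
    {xi : ℝ → Om → ℕ} {t : ℝ} (ht : 0 ≤ t)
    (hM : IsMarkovChainFrom P lam mu x eta) (hP : IsPoissonProcess P alpha nu)
    (hI : IndepProc P eta nu) (hf : ∀ s ω, xi s ω = eta (nu s ω) ω) (c : ℕ) :
    P {ω | c ≤ xi t ω}
      = ∑' n, ENNReal.ofReal (Real.exp (-(alpha * (t - 0))) * (alpha * (t - 0)) ^ n /
          (Nat.factorial n)) * TailL lam mu x n c := by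
  have hset : {ω | c ≤ xi t ω} = ⋃ n, ({ω | nu t ω = n} ∩ {ω | c ≤ eta n ω}) := by
    ext ω
    simp only [Set.mem_setOf_eq, Set.mem_iUnion, Set.mem_inter_iff]
    rw [hf t ω]
    constructor
    · intro h
      exact ⟨nu t ω, rfl, h⟩
    · rintro ⟨n, rfl, h⟩
      exact h
  have hmeas : ∀ n : ℕ, MeasurableSet ({ω | nu t ω = n} ∩ {ω | c ≤ eta n ω}) := by
    intro n
    exact ((hP.1 t) (measurableSet_singleton n)).inter ((hM.1 n) measurableSet_Ici)
  have hdisj : Pairwise (Function.onFun Disjoint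
      (fun n : ℕ => {ω | nu t ω = n} ∩ {ω | c ≤ eta n ω})) := by
    intro a b hab
    rw [Function.onFun, Set.disjoint_left]
    rintro ω ⟨h1, -⟩ ⟨h2, -⟩
    have e1 : nu t ω = a := h1
    have e2 : nu t ω = b := h2
    exact hab (e1.symm.trans e2)
  rw [hset, measure_iUnion hdisj hmeas]
  apply tsum_congr
  intro n
  have hA : MeasurableSet {u : ℕ → ℕ | c ≤ u n} := by
    exact (measurable_pi_apply n) measurableSet_Ici
  have hB : MeasurableSet {v : ℝ → ℕ | v t = n} := by
    have h : MeasurableSet ((fun v : ℝ → ℕ => v t) ⁻¹' {n}) :=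
      (measurable_pi_apply t) (measurableSet_singleton n)
    exact h
  have hind := hI.measure_inter_preimage_eq_mul _ _ hA hB
  have hs1 : (fun ω => fun k => eta k ω) ⁻¹' {u : ℕ → ℕ | c ≤ u n} = {ω | c ≤ eta n ω} := rfl
  have hs2 : (fun ω => fun s => nu s ω) ⁻¹' {v : ℝ → ℕ | v t = n} = {ω | nu t ω = n} := rfl
  rw [hs1, hs2] at hind
  rw [Set.inter_comm, hind]
  have hpois := hP.2.2.2.2 0 t le_rfl ht n
  have hνset : {ω | nu t ω - nu 0 ω = n} = {ω | nu t ω = n} := by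
    ext ω
    rw [Set.mem_setOf_eq, Set.mem_setOf_eq, hP.2.1 ω, Nat.sub_zero]
  rw [hνset] at hpois
  rw [hpois, tail_marg hM n c, mul_comm]

end TailCmp

/-- **Monotone comparison of tails.** For integers `0 ≤ x < y`, any real `z`, and any
`t ≥ 0`, `P(ξ_y(t) > z) ≤ P(ξ_x(t) > z - |x - y|)` for any versions `ξ_x`, `ξ_y` of the
Poisson process with uniform catastrophes started from `x` and from `y`. -/
theorem tail_comparison_poisson_uniform_catastrophes
    {Ω₁ Ω₂ : Type*} [MeasurableSpace Ω₁] [MeasurableSpace Ω₂]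
    (P₁ : Measure Ω₁) (P₂ : Measure Ω₂)
    [IsProbabilityMeasure P₁] [IsProbabilityMeasure P₂]
    (lam mu alpha : ℝ) (hlam : 0 < lam) (hmu : 0 < mu) (halpha : 0 < alpha)
    (x y : ℕ) (hxy : x < y)
    (ξx : ℝ → Ω₁ → ℕ) (ξy : ℝ → Ω₂ → ℕ)
    (hx : IsCatastropheProcessFrom P₁ lam mu alpha x ξx)
    (hy : IsCatastropheProcessFrom P₂ lam mu alpha y ξy)
    (z : ℝ) (t : ℝ) (ht : 0 ≤ t) :
    P₂ {ω | z < (ξy t ω : ℝ)} ≤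
      P₁ {ω | z - |(x : ℝ) - (y : ℝ)| < (ξx t ω : ℝ)} := by
  classical
  obtain ⟨ηx, νx, hMx, hPx, hIx, hfx⟩ := hx
  obtain ⟨ηy, νy, hMy, hPy, hIy, hfy⟩ := hy
  set d : ℕ := y - x with hdd
  have hd : 1 ≤ d := by omega
  have hyd : y = x + d := by omega
  have habs : |(x : ℝ) - (y : ℝ)| = (d : ℝ) := by
    rw [abs_sub_comm, abs_of_nonneg (by
      have : (x:ℝ) ≤ y := by exact_mod_cast hxy.le
      linarith)]
    rw [hdd, Nat.cast_sub hxy.le]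
  -- integer thresholds
  have hthr : ∀ (w : ℝ) (m : ℕ), w < (m : ℝ) ↔ (if 0 ≤ w then ⌊w⌋₊ + 1 else 0) ≤ m := by
    intro w m
    by_cases hw : 0 ≤ w
    · rw [if_pos hw, Nat.succ_le_iff, ← Nat.floor_lt hw]
    · rw [if_neg hw]
      constructor
      · intro _; exact Nat.zero_le m
      · intro _
        have : (0:ℝ) ≤ m := Nat.cast_nonneg m
        linarith [not_le.mp hw]
  set cy : ℕ := if 0 ≤ z then ⌊z⌋₊ + 1 else 0 with hcy
  set cx : ℕ := if 0 ≤ z - (d:ℝ) then ⌊z - (d:ℝ)⌋₊ + 1 else 0 with hcx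
  have hsety : {ω | z < (ξy t ω : ℝ)} = {ω | cy ≤ ξy t ω} := by
    ext ω; rw [Set.mem_setOf_eq, Set.mem_setOf_eq, hthr z (ξy t ω)]
  have hsetx : {ω | z - |(x : ℝ) - (y : ℝ)| < (ξx t ω : ℝ)} = {ω | cx ≤ ξx t ω} := by
    ext ω
    rw [Set.mem_setOf_eq, Set.mem_setOf_eq, habs, hthr (z - (d:ℝ)) (ξx t ω)]
  rw [hsety, hsetx]
  rw [TailCmp.xi_tail ht hMy hPy hIy hfy cy, TailCmp.xi_tail ht hMx hPx hIx hfx cx]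
  apply Summable.tsum_le_tsum _ ENNReal.summable ENNReal.summable
  intro n
  apply mul_le_mul_right
  -- key comparison of tails of the embedded chains
  by_cases hzd : 0 ≤ z - (d:ℝ)
  · have hz : (0:ℝ) ≤ z := by
      have : (0:ℝ) ≤ (d:ℝ) := Nat.cast_nonneg d
      linarith
    have hfloor : ⌊z - (d:ℝ)⌋₊ = ⌊z⌋₊ - d := by
      have := Nat.floor_add_natCast hzd d
      rw [sub_add_cancel] at this
      omega
    have hdlez : d ≤ ⌊z⌋₊ := Nat.le_floor (by linarith)
    have hcyx : cy = cx + d := by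
      rw [hcy, hcx, if_pos hz, if_pos hzd, hfloor]
      omega
    rw [hcyx, hyd]
    exact TailCmp.tail_dom hlam hmu x d hd n cx
  · have hcx0 : cx = 0 := by rw [hcx, if_neg hzd]
    rw [hcx0, TailCmp.TailL_zero hlam hmu x n]
    exact TailCmp.TailL_le_one hlam hmu y n cy
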